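/- Let v be a binary vector of length n whose entries equal to 1 occur exactly at the positions j_1 < j_2 < … < j_m, with m ≥ 1. Suppose that for each k ∈ {1,…,m} there are positive integers z_k and t_k satisfying 3^k·z_k + 2^{j_k − 1} = 2^n·t_k. Then the positive integer X* = Σ_{k=1}^{m} z_k has parity vector of length n equal to v, and T^n(X*) = Σ_{k=1}^{m} 3^{m−k}·t_k. (Paper's Theorem 4.9.) -/

import Mathlib

/-- The Collatz map `T`. -/
def collatzT (N : ℕ) : ℕ := if N % 2 = 0 then N / 2 else (3 * N + 1) / 2

/-- The parity vector of length `n` of `N`: entry `k` is `true` iff `T^[k] N` is odd. -/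
def parityVec (N n : ℕ) : List Bool :=
  (List.range n).map (fun k => decide ((collatzT^[k] N) % 2 = 1))

/-- `m(v)`: the number of ones of a binary vector. -/
def mOnes (v : List Bool) : ℕ := v.count true

/-- `P(v)`: the characteristic number of a binary vector,
`P(v) = Σ_{k=1}^{m} 3^(m-k) * 2^(j_k - 1)` where `j_1 < … < j_m` are the positions of ones. -/
def Pchar : List Bool → ℕ
  | [] => 0
  | e :: rest => (if e then 3 ^ mOnes rest else 0) + 2 * Pchar rest

lemma parityVec_succ (N n : ℕ) :
    parityVec N (n+1) = decide (N % 2 = 1) :: parityVec (collatzT N) n := by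
  unfold parityVec
  rw [List.range_succ_eq_map]
  simp [Function.comp, Function.iterate_succ_apply]
  exact ⟨by congr, fun _ _ => by congr⟩

lemma key : ∀ (v : List Bool) (X Y : ℕ),
    3 ^ mOnes v * X + Pchar v = 2 ^ v.length * Y →
    parityVec X v.length = v ∧ collatzT^[v.length] X = Y := by
  intro v
  induction v with
  | nil =>
    intro X Y h
    simp [mOnes, Pchar] at h
    simp [parityVec, h]
  | cons e rest ih =>
    intro X Y h
    cases e with
    | false =>
      have hM : mOnes (false :: rest) = mOnes rest := by simp [mOnes]
      have hP : Pchar (false :: rest) = 2 * Pchar rest := by simp [Pchar]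
      rw [hM, hP, List.length_cons] at h
      have h3 : 3 ^ mOnes rest % 2 = 1 := by simp [Nat.pow_mod]
      have hX : X % 2 = 0 := by
        have hmod := congrArg (· % 2) h
        simp [Nat.add_mod, Nat.mul_mod, Nat.pow_mod] at hmod
        omega
      obtain ⟨X', rfl⟩ : ∃ X', X = 2 * X' := ⟨X / 2, by omega⟩
      have h2 : 2 * (3 ^ mOnes rest * X' + Pchar rest) = 2 * (2 ^ rest.length * Y) := by
        calc 2 * (3 ^ mOnes rest * X' + Pchar rest)
            = 3 ^ mOnes rest * (2 * X') + 2 * Pchar rest := by ring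
          _ = 2 ^ (rest.length + 1) * Y := h
          _ = 2 * (2 ^ rest.length * Y) := by rw [pow_succ]; ring
      have h' := Nat.eq_of_mul_eq_mul_left (by norm_num) h2
      obtain ⟨hp, hT⟩ := ih (2 * X' / 2) Y (by simpa using h')
      have hTX : collatzT (2 * X') = X' := by simp [collatzT]
      constructor
      · rw [List.length_cons, parityVec_succ, hTX]
        simp at hp
        rw [hp]
        simp [Nat.mul_mod]
      · rw [List.length_cons, Function.iterate_succ_apply, hTX]
        simpa using hT
    | true =>
      have hM : mOnes (true :: rest) = mOnes rest + 1 := by simp [mOnes]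
      have hP : Pchar (true :: rest) = 3 ^ mOnes rest + 2 * Pchar rest := by simp [Pchar]
      rw [hM, hP, List.length_cons] at h
      have hX : X % 2 = 1 := by
        have hmod := congrArg (· % 2) h
        simp [Nat.add_mod, Nat.mul_mod, Nat.pow_mod] at hmod
        omega
      obtain ⟨X', rfl⟩ : ∃ X', X = 2 * X' + 1 := ⟨X / 2, by omega⟩
      have h2 : 2 * (3 ^ mOnes rest * (3 * X' + 2) + Pchar rest) = 2 * (2 ^ rest.length * Y) := by
        calc 2 * (3 ^ mOnes rest * (3 * X' + 2) + Pchar rest)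
            = 3 ^ (mOnes rest + 1) * (2 * X' + 1) + (3 ^ mOnes rest + 2 * Pchar rest) := by
              rw [pow_succ]; ring
          _ = 2 ^ (rest.length + 1) * Y := h
          _ = 2 * (2 ^ rest.length * Y) := by rw [pow_succ]; ring
      have h' := Nat.eq_of_mul_eq_mul_left (show 0 < 2 by norm_num) h2
      have hTX : collatzT (2 * X' + 1) = 3 * X' + 2 := by
        simp [collatzT, Nat.mul_mod, Nat.add_mod]
        omega
      obtain ⟨hp, hT⟩ := ih (3 * X' + 2) Y h'
      constructor
      · rw [List.length_cons, parityVec_succ, hTX, hp]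
        simp [Nat.add_mod, Nat.mul_mod]
      · rw [List.length_cons, Function.iterate_succ_apply, hTX, hT]

lemma mOnes_drop (v : List Bool) : ∀ d, mOnes (v.drop d) =
    ∑ i ∈ Finset.range v.length, (if v.getD i false = true ∧ d ≤ i then 1 else 0) := by
  induction v with
  | nil => intro d; simp [mOnes]
  | cons e rest ih =>
    intro d
    cases d with
    | zero =>
      rw [List.drop_zero, List.length_cons, Finset.sum_range_succ']
      have h0 := ih 0
      rw [List.drop_zero] at h0
      simp only [Nat.zero_le, and_true] at h0
      simp only [List.getD_cons_succ, List.getD_cons_zero, Nat.zero_le, and_true]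
      rw [← h0]
      cases e <;> simp [mOnes]
    | succ d =>
      rw [List.drop_succ_cons, List.length_cons, Finset.sum_range_succ']
      simp only [List.getD_cons_succ, List.getD_cons_zero, Nat.succ_le_succ_iff]
      rw [ih d]
      simp
lemma mOnes_eq (v : List Bool) : mOnes v =
    ∑ i ∈ Finset.range v.length, (if v.getD i false = true then 1 else 0) := by
  have := mOnes_drop v 0
  simpa using this

lemma Pchar_eq (v : List Bool) : Pchar v =
    ∑ i ∈ Finset.range v.length,
      (if v.getD i false = true then 2 ^ i * 3 ^ mOnes (v.drop (i+1)) else 0) := by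
  induction v with
  | nil => simp [Pchar]
  | cons e rest ih =>
    rw [List.length_cons, Finset.sum_range_succ']
    simp only [List.getD_cons_succ, List.getD_cons_zero, List.drop_succ_cons, List.drop_zero]
    rw [show Pchar (e :: rest) = (if e = true then 3 ^ mOnes rest else 0) + 2 * Pchar rest from by
      cases e <;> simp [Pchar]]
    rw [ih, Finset.mul_sum, add_comm]
    congr 1
    · apply Finset.sum_congr rfl
      intro i _
      by_cases h : rest.getD i false = true <;> simp [h, pow_succ] <;> ring
    · cases e <;> simp

lemma sum_bij_j {n m : ℕ} (v : List Bool) (hv : v.length = n) (j : Fin m → ℕ)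
    (hinj : Function.Injective j) (hj1 : ∀ k, 1 ≤ j k) (hjn : ∀ k, j k ≤ n)
    (hones : ∀ i : ℕ, i < n → (v.getD i false = true ↔ ∃ k, j k = i + 1)) (f : ℕ → ℕ) :
    ∑ i ∈ Finset.range n, (if v.getD i false = true then f i else 0)
      = ∑ k : Fin m, f (j k - 1) := by
  rw [← Finset.sum_filter]
  refine (Finset.sum_bij (fun k _ => j k - 1) ?_ ?_ ?_ ?_).symm
  · intro k _
    rw [Finset.mem_filter, Finset.mem_range]
    have h1 := hj1 k; have h2 := hjn k
    refine ⟨by omega, (hones _ (by omega)).2 ⟨k, by omega⟩⟩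
  · intro a _ b _ hab
    have h1 := hj1 a; have h2 := hj1 b
    exact hinj (by omega)
  · intro i hi
    rw [Finset.mem_filter, Finset.mem_range] at hi
    obtain ⟨k, hk⟩ := (hones i hi.1).1 hi.2
    exact ⟨k, Finset.mem_univ k, by omega⟩
  · intro k _; rfl

/-- Paper's Theorem 4.9: if the ones of v (of length n) occur exactly at the
positions j 0 < j 1 < … < j (m-1) (1-indexed positions), and for each k there are
positive integers z k, t k with `3^(k+1) * z k + 2^(j k - 1) = 2^n * t k`, then
`X* = Σ z k` realizes v as its parity vector of length n and
`T^[n] X* = Σ 3^(m-1-k) * t k`. -/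
theorem stmt_12 (n m : ℕ) (hm : 1 ≤ m) (v : List Bool) (hv : v.length = n)
    (j : Fin m → ℕ) (hmono : StrictMono j)
    (hj1 : ∀ k, 1 ≤ j k) (hjn : ∀ k, j k ≤ n)
    (hones : ∀ i : ℕ, i < n → (v.getD i false = true ↔ ∃ k, j k = i + 1))
    (z t : Fin m → ℕ) (hz : ∀ k, 0 < z k) (ht : ∀ k, 0 < t k)
    (heq : ∀ k : Fin m, 3 ^ ((k : ℕ) + 1) * z k + 2 ^ (j k - 1) = 2 ^ n * t k) :
    parityVec (∑ k, z k) n = v ∧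
      collatzT^[n] (∑ k, z k) = ∑ k : Fin m, 3 ^ (m - 1 - (k : ℕ)) * t k := by
  subst hv
  have hmM : mOnes v = m := by
    rw [mOnes_eq, sum_bij_j v rfl j hmono.injective hj1 hjn hones (fun _ => 1)]
    simp
  have hdrop : ∀ k : Fin m, mOnes (v.drop (j k)) = m - 1 - (k : ℕ) := by
    intro k
    rw [mOnes_drop]
    have hsplit : ∀ i : ℕ, (if v.getD i false = true ∧ j k ≤ i then 1 else 0)
        = (if v.getD i false = true then (if j k ≤ i then 1 else 0) else 0) := by
      intro i
      by_cases h1 : v.getD i false = true <;> by_cases h2 : j k ≤ i <;> simp [h1, h2]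
    simp_rw [hsplit]
    rw [sum_bij_j v rfl j hmono.injective hj1 hjn hones (fun i => if j k ≤ i then 1 else 0)]
    have hiff : ∀ k' : Fin m, (j k ≤ j k' - 1) ↔ k < k' := by
      intro k'
      have h1 := hj1 k'
      rw [show (j k ≤ j k' - 1) ↔ (j k < j k') from by omega, hmono.lt_iff_lt]
    calc ∑ k' : Fin m, (if j k ≤ j k' - 1 then 1 else 0)
        = ∑ k' : Fin m, (if k < k' then 1 else 0) := by
          apply Finset.sum_congr rfl; intro k' _
          simp [hiff k']
      _ = (Finset.univ.filter (fun k' : Fin m => k < k')).card := by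
          rw [Finset.card_filter]
      _ = (Finset.Ioi k).card := by congr 1; ext k'; simp
      _ = m - 1 - (k : ℕ) := Fin.card_Ioi k
  have hP : Pchar v = ∑ k : Fin m, 2 ^ (j k - 1) * 3 ^ (m - 1 - (k : ℕ)) := by
    rw [Pchar_eq, sum_bij_j v rfl j hmono.injective hj1 hjn hones
      (fun i => 2 ^ i * 3 ^ mOnes (v.drop (i+1)))]
    apply Finset.sum_congr rfl
    intro k _
    have hjk : j k - 1 + 1 = j k := by have := hj1 k; omega
    rw [hjk, hdrop k]
  have hkey := key v (∑ k, z k) (∑ k : Fin m, 3 ^ (m - 1 - (k : ℕ)) * t k) ?_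
  · exact hkey
  · rw [hmM, hP, Finset.mul_sum, Finset.mul_sum, ← Finset.sum_add_distrib]
    apply Finset.sum_congr rfl
    intro k _
    have h3 : 3 ^ (m - 1 - (k : ℕ)) * 3 ^ ((k : ℕ) + 1) = 3 ^ m := by
      rw [← pow_add]; congr 1; have := k.isLt; omega
    calc 3 ^ m * z k + 2 ^ (j k - 1) * 3 ^ (m - 1 - (k : ℕ))
        = 3 ^ (m - 1 - (k : ℕ)) * (3 ^ ((k : ℕ) + 1) * z k + 2 ^ (j k - 1)) := by
          rw [← h3]; ring
      _ = 3 ^ (m - 1 - (k : ℕ)) * (2 ^ v.length * t k) := by rw [heq k]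
      _ = 2 ^ v.length * (3 ^ (m - 1 - (k : ℕ)) * t k) := by ring
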